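/- Let X_1, …, X_n be distinct points in (0,∞) and let f̂_n be the Grenander estimator computed from these points. Then for every function h : ℝ → ℝ, ∫₀^∞ h(f̂_n(x)) f̂_n(x) dx = n^{-1} ∑_{i=1}^n h(f̂_n(X_i)); that is, the plug-in estimator ∫ h(f̂_n) d P̂_n equals the empirical-measure estimator ∫ h(f̂_n) d ℙ_n, where P̂_n is the measure with density f̂_n and ℙ_n is the empirical measure of X_1, …, X_n. -/

import Mathlib

open MeasureTheory ProbabilityTheory Filter Topology Set

noncomputable section

/-- Empirical distribution function of the first `n` observations `X 0, …, X (n-1)`. -/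
def empCDF (X : ℕ → ℝ) (n : ℕ) (x : ℝ) : ℝ :=
  (n : ℝ)⁻¹ * ∑ i ∈ Finset.range n, if X i ≤ x then (1 : ℝ) else 0

/-- Least concave majorant operator over a set `T`: the pointwise infimum over all
bounded concave functions on `T` that dominate `ξ` on `T`. -/
def lcmOn (T : Set ℝ) (ξ : ℝ → ℝ) (x : ℝ) : ℝ :=
  sInf {y : ℝ | ∃ η : ℝ → ℝ, ConcaveOn ℝ T η ∧ (∃ C, ∀ z ∈ T, |η z| ≤ C) ∧
      (∀ z ∈ T, ξ z ≤ η z) ∧ η x = y}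

/-- The least concave majorant of the empirical CDF on `[0,∞)`. -/
def lcmCDF (X : ℕ → ℝ) (n : ℕ) : ℝ → ℝ := lcmOn (Ici 0) (empCDF X n)

/-- Grenander estimator: left-hand derivative of the LCM of the empirical CDF. -/
def grenander (X : ℕ → ℝ) (n : ℕ) (x : ℝ) : ℝ :=
  derivWithin (lcmCDF X n) (Iio x) x

/-- `TFx F x`: the set `{x}` together with the union of all open intervals contained in
`[0,∞)`, containing `x`, on which `F` is affine. -/
def TFx (F : ℝ → ℝ) (x : ℝ) : Set ℝ :=
  {x} ∪ ⋃₀ {A : Set ℝ | (∃ u v : ℝ, A = Ioo u v) ∧ A ⊆ Ici 0 ∧ x ∈ A ∧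
      ∃ a b : ℝ, ∀ z ∈ A, F z = a * z + b}

/-- Hadamard directional derivative of the LCM operator at the concave function `F`:
`(M'_F ξ)(x) = M_{T_{F,x}} ξ (x)`. -/
def lcmDeriv (F : ℝ → ℝ) (ξ : ℝ → ℝ) (x : ℝ) : ℝ := lcmOn (TFx F x) ξ x

/-- `IsLSIntegralOn ψ φ s I` : `I` is the Lebesgue–Stieltjes integral `∫_s φ d[ψ]` of `φ`
against the finite-total-variation function `ψ`, over the set `s`; the signed
Lebesgue–Stieltjes measure induced by `ψ` is represented as a difference `ν₁ - ν₂` of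
finite measures carried by `s` whose difference of `Ioc`-increments matches those of `ψ`. -/
def IsLSIntegralOn (ψ φ : ℝ → ℝ) (s : Set ℝ) (I : ℝ) : Prop :=
  ∃ ν₁ ν₂ : Measure ℝ, IsFiniteMeasure ν₁ ∧ IsFiniteMeasure ν₂ ∧
    ν₁ sᶜ = 0 ∧ ν₂ sᶜ = 0 ∧
    (∀ a b : ℝ, a ∈ s → b ∈ s → a ≤ b →
      (ν₁ (Ioc a b)).toReal - (ν₂ (Ioc a b)).toReal = ψ b - ψ a) ∧
    Integrable φ ν₁ ∧ Integrable φ ν₂ ∧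
    I = (∫ x, φ x ∂ν₁) - ∫ x, φ x ∂ν₂

/-- A Brownian bridge on `[0,1]`: a centered Gaussian process with a.s. continuous paths and
covariance `min s t - s t` (every finite linear combination is a centered Gaussian). -/
def IsBrownianBridge {Ω : Type*} [MeasurableSpace Ω] (P : Measure Ω)
    (B : ℝ → Ω → ℝ) : Prop :=
  (∀ t, Measurable (B t)) ∧
  (∀ᵐ ω ∂P, ContinuousOn (fun t => B t ω) (Icc 0 1)) ∧
  ∀ (m : ℕ) (t c : Fin m → ℝ), (∀ i, t i ∈ Icc (0 : ℝ) 1) →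
    Measure.map (fun ω => ∑ i, c i * B (t i) ω) P =
      gaussianReal 0 (∑ i, ∑ j, c i * c j * (min (t i) (t j) - t i * t j)).toNNReal

/-- A standard Brownian motion on `[0,1]`: a centered Gaussian process with a.s. continuous
paths and covariance `min s t`. -/
def IsBrownianMotion {Ω : Type*} [MeasurableSpace Ω] (P : Measure Ω)
    (W : ℝ → Ω → ℝ) : Prop :=
  (∀ t, Measurable (W t)) ∧
  (∀ᵐ ω ∂P, ContinuousOn (fun t => W t ω) (Icc 0 1)) ∧
  ∀ (m : ℕ) (t c : Fin m → ℝ), (∀ i, t i ∈ Icc (0 : ℝ) 1) →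
    Measure.map (fun ω => ∑ i, c i * W (t i) ω) P =
      gaussianReal 0 (∑ i, ∑ j, c i * c j * min (t i) (t j)).toNNReal

/-- Convergence in distribution of real random variables to a limiting random variable. -/
def TendstoInDistribution {Ω Ω' : Type*} [MeasurableSpace Ω] [MeasurableSpace Ω']
    (P : Measure Ω) (Z : ℕ → Ω → ℝ) (P' : Measure Ω') (Y : Ω' → ℝ) : Prop :=
  ∀ φ : BoundedContinuousFunction ℝ ℝ,
    Tendsto (fun n => ∫ ω, φ (Z n ω) ∂P) atTop (𝓝 (∫ ω, φ (Y ω) ∂P'))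

/-- Convergence in distribution towards a limiting law on `ℝ`. -/
def TendstoInLaw {Ω : Type*} [MeasurableSpace Ω]
    (P : Measure Ω) (Z : ℕ → Ω → ℝ) (ν : Measure ℝ) : Prop :=
  ∀ φ : BoundedContinuousFunction ℝ ℝ,
    Tendsto (fun n => ∫ ω, φ (Z n ω) ∂P) atTop (𝓝 (∫ x, φ x ∂ν))

/-- Convergence to zero in probability. -/
def TendstoInProbabilityZero {Ω : Type*} [MeasurableSpace Ω]
    (P : Measure Ω) (Z : ℕ → Ω → ℝ) : Prop :=
  ∀ ε : ℝ, 0 < ε → Tendsto (fun n => P {ω | ε ≤ |Z n ω|}) atTop (𝓝 0)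

/-- The sequence `X` is i.i.d. with common law `μ`. -/
def IsIIDWithLaw {Ω : Type*} [MeasurableSpace Ω] (P : Measure Ω)
    (X : ℕ → Ω → ℝ) (μ : Measure ℝ) : Prop :=
  (∀ i, Measurable (X i)) ∧ (∀ i, Measure.map (X i) P = μ) ∧
    iIndepFun X P

namespace GrenAux

variable (X : ℕ → ℝ) (n : ℕ)

/-- data points -/
def pts : Finset ℝ := (Finset.range n).image X

/-- slope of chord of `F` -/
def sl (F : ℝ → ℝ) (a b : ℝ) : ℝ := (F b - F a) / (b - a)

lemma nxt_aux (a : ℝ) (h : ((pts X n).filter (fun u => a < u)).Nonempty) :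
    (((pts X n).filter (fun u => a < u)).filter
      (fun u => sl (empCDF X n) a u =
        ((pts X n).filter (fun u => a < u)).sup' h (sl (empCDF X n) a))).Nonempty := by
  obtain ⟨u, hu, he⟩ := Finset.exists_mem_eq_sup' h (sl (empCDF X n) a)
  exact ⟨u, Finset.mem_filter.2 ⟨hu, he.symm⟩⟩

/-- next kink of the concave hull after `a` -/
def nxt (a : ℝ) : ℝ :=
  if h : ((pts X n).filter (fun u => a < u)).Nonempty then
    (((pts X n).filter (fun u => a < u)).filter
      (fun u => sl (empCDF X n) a u =
        ((pts X n).filter (fun u => a < u)).sup' h (sl (empCDF X n) a))).max'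
      (nxt_aux X n a h)
  else a

/-- kinks of the concave hull -/
def tau (k : ℕ) : ℝ := (nxt X n)^[k] 0

/-- slopes of the hull pieces -/
def sk (k : ℕ) : ℝ := sl (empCDF X n) (tau X n k) (tau X n (k+1))

/-- the affine pieces of the hull -/
def lin (k : ℕ) (x : ℝ) : ℝ := empCDF X n (tau X n k) + sk X n k * (x - tau X n k)

/-- the concave hull as minimum of the affine pieces -/
def G (x : ℝ) : ℝ := (Finset.range (n+1)).inf' ⟨0, by simp⟩ (fun k => lin X n k x)

lemma tau_zero : tau X n 0 = 0 := rfl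

lemma tau_succ (k : ℕ) : tau X n (k+1) = nxt X n (tau X n k) := by
  simp [tau, Function.iterate_succ_apply']

lemma nxt_mem {a : ℝ} (h : ((pts X n).filter (fun u => a < u)).Nonempty) :
    nxt X n a ∈ pts X n ∧ a < nxt X n a := by
  rw [nxt, dif_pos h]
  have := Finset.max'_mem _ (nxt_aux X n a h)
  simp only [Finset.mem_filter] at this
  exact ⟨this.1.1, this.1.2⟩

lemma nxt_eq {a : ℝ} (h : ¬ ((pts X n).filter (fun u => a < u)).Nonempty) :
    nxt X n a = a := by rw [nxt, dif_neg h]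

lemma le_nxt (a : ℝ) : a ≤ nxt X n a := by
  by_cases h : ((pts X n).filter (fun u => a < u)).Nonempty
  · exact (nxt_mem X n h).2.le
  · rw [nxt_eq X n h]

lemma sl_le_nxt {a u : ℝ} (hu : u ∈ pts X n) (hau : a < u) :
    sl (empCDF X n) a u ≤ sl (empCDF X n) a (nxt X n a) := by
  have h : ((pts X n).filter (fun u => a < u)).Nonempty :=
    ⟨u, Finset.mem_filter.2 ⟨hu, hau⟩⟩
  have h1 : nxt X n a ∈ ((pts X n).filter (fun u => a < u)).filter
      (fun v => sl (empCDF X n) a v =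
        ((pts X n).filter (fun u => a < u)).sup' h (sl (empCDF X n) a)) := by
    rw [nxt, dif_pos h]; exact Finset.max'_mem _ _
  have h2 := (Finset.mem_filter.1 h1).2
  rw [h2]
  exact Finset.le_sup' _ (Finset.mem_filter.2 ⟨hu, hau⟩)

lemma tau_mono : Monotone (tau X n) :=
  monotone_nat_of_le_succ (fun k => by rw [tau_succ]; exact le_nxt X n _)

lemma tau_nonneg (k : ℕ) : 0 ≤ tau X n k := tau_mono X n (Nat.zero_le k)

end GrenAux

namespace GrenAux
variable (X : ℕ → ℝ) (n : ℕ)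

lemma F_mono : Monotone (empCDF X n) := by
  intro a b hab
  unfold empCDF
  have h1 : (0:ℝ) ≤ (n : ℝ)⁻¹ := by positivity
  apply mul_le_mul_of_nonneg_left _ h1
  apply Finset.sum_le_sum
  intro i _
  split_ifs with ha hb hb
  · norm_num
  · exact absurd (le_trans ha hab) hb
  · norm_num
  · norm_num

lemma F_nonneg (x : ℝ) : 0 ≤ empCDF X n x := by
  unfold empCDF
  have : (0:ℝ) ≤ ∑ i ∈ Finset.range n, (if X i ≤ x then (1:ℝ) else 0) :=
    Finset.sum_nonneg (fun i _ => by split <;> norm_num)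
  positivity

lemma F_le_one (x : ℝ) : empCDF X n x ≤ 1 := by
  unfold empCDF
  rcases Nat.eq_zero_or_pos n with h | h
  · simp [h]
  · have h1 : ∑ i ∈ Finset.range n, (if X i ≤ x then (1:ℝ) else 0) ≤ n := by
      calc ∑ i ∈ Finset.range n, (if X i ≤ x then (1:ℝ) else 0)
          ≤ ∑ i ∈ Finset.range n, 1 := by
            apply Finset.sum_le_sum; intro i _; split <;> norm_num
        _ = n := by simp
    have h2 : (0:ℝ) < n := by exact_mod_cast h
    calc (n : ℝ)⁻¹ * ∑ i ∈ Finset.range n, (if X i ≤ x then (1:ℝ) else 0)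
        ≤ (n : ℝ)⁻¹ * n := by
          apply mul_le_mul_of_nonneg_left h1 (by positivity)
      _ = 1 := by field_simp

lemma F_diff {a b : ℝ} (hab : a ≤ b) :
    empCDF X n b - empCDF X n a =
      (n : ℝ)⁻¹ * ((Finset.range n).filter (fun i => X i ∈ Ioc a b)).card := by
  unfold empCDF
  rw [← mul_sub]
  congr 1
  rw [Finset.card_filter, ← Finset.sum_sub_distrib]
  push_cast
  apply Finset.sum_congr rfl
  intro i _
  by_cases h1 : X i ≤ a
  · rw [if_pos h1, if_pos (le_trans h1 hab), if_neg (by simp [mem_Ioc, not_lt.2 h1])]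
    norm_num
  · rw [if_neg h1]
    by_cases h2 : X i ≤ b
    · rw [if_pos h2, if_pos (mem_Ioc.2 ⟨not_le.1 h1, h2⟩)]; norm_num
    · rw [if_neg h2, if_neg (by simp [mem_Ioc, h2])]; norm_num

lemma F_congr_of_count {a b : ℝ} (h : ∀ i < n, (X i ≤ a ↔ X i ≤ b)) :
    empCDF X n a = empCDF X n b := by
  unfold empCDF
  congr 1
  apply Finset.sum_congr rfl
  intro i hi
  simp only [Finset.mem_range] at hi
  simp [h i hi]

/-- every step removes at least one point from the strict upper set -/
lemma stab_card (k : ℕ) : ((pts X n).filter (fun u => tau X n k < u)).card ≤ n - k := by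
  induction k with
  | zero =>
    simpa [pts] using le_trans (Finset.card_filter_le _ _)
      (le_trans Finset.card_image_le (by simp))
  | succ k ih =>
    by_cases h : ((pts X n).filter (fun u => tau X n k < u)).Nonempty
    · have hmem : tau X n (k+1) ∈ (pts X n).filter (fun u => tau X n k < u) := by
        rw [tau_succ]
        exact Finset.mem_filter.2 ⟨(nxt_mem X n h).1, (nxt_mem X n h).2⟩
      have hsub : ((pts X n).filter (fun u => tau X n (k+1) < u)) ⊆
          ((pts X n).filter (fun u => tau X n k < u)).erase (tau X n (k+1)) := by
        intro u hu
        simp only [Finset.mem_filter] at hu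
        refine Finset.mem_erase.2 ⟨ne_of_gt hu.2, Finset.mem_filter.2 ⟨hu.1, ?_⟩⟩
        exact lt_of_le_of_lt (tau_mono X n (Nat.le_succ k)) hu.2
      have h1 := Finset.card_le_card hsub
      have h2 : (((pts X n).filter (fun u => tau X n k < u)).erase (tau X n (k+1))).card
          = ((pts X n).filter (fun u => tau X n k < u)).card - 1 :=
        Finset.card_erase_of_mem hmem
      have h3 : 1 ≤ ((pts X n).filter (fun u => tau X n k < u)).card :=
        Finset.card_pos.2 h
      omega
    · have heq : tau X n (k+1) = tau X n k := by
        rw [tau_succ]; exact nxt_eq X n h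
      rw [heq]
      have : ((pts X n).filter (fun u => tau X n k < u)).card = 0 := by
        rw [Finset.card_eq_zero, ← Finset.not_nonempty_iff_eq_empty]; exact h
      omega

lemma stab : ∀ p ∈ pts X n, p ≤ tau X n n := by
  intro p hp
  by_contra hc
  push_neg at hc
  have h := stab_card X n n
  simp only [Nat.sub_self, Nat.le_zero, Finset.card_eq_zero] at h
  have : p ∈ (pts X n).filter (fun u => tau X n n < u) := Finset.mem_filter.2 ⟨hp, hc⟩
  rw [h] at this; simp at this

lemma X_mem_pts {i : ℕ} (hi : i < n) : X i ∈ pts X n :=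
  Finset.mem_image.2 ⟨i, Finset.mem_range.2 hi, rfl⟩

lemma tau_top : tau X n (n+1) = tau X n n := by
  rw [tau_succ]
  apply nxt_eq
  rw [Finset.not_nonempty_iff_eq_empty, Finset.filter_eq_empty_iff]
  intro u hu
  exact not_lt.2 (stab X n u hu)

lemma F_tau_n (hn : 0 < n) : empCDF X n (tau X n n) = 1 := by
  unfold empCDF
  have h : ∀ i ∈ Finset.range n, (if X i ≤ tau X n n then (1:ℝ) else 0) = 1 := by
    intro i hi
    rw [if_pos (stab X n _ (X_mem_pts X n (Finset.mem_range.1 hi)))]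
  rw [Finset.sum_congr rfl h]
  have h2 : (n:ℝ) ≠ 0 := Nat.cast_ne_zero.2 hn.ne'
  simp
  field_simp

lemma sk_n : sk X n n = 0 := by
  unfold sk sl
  rw [tau_top]; simp

end GrenAux
namespace GrenAux
variable (X : ℕ → ℝ) (n : ℕ)

/-- chord identity: line through `(τ k, F τ k)` with slope `sk k` hits `F` at `τ (k+1)` -/
lemma Lval (k : ℕ) :
    empCDF X n (tau X n k) + sk X n k * (tau X n (k+1) - tau X n k)
      = empCDF X n (tau X n (k+1)) := by
  by_cases h : tau X n (k+1) = tau X n k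
  · rw [h]; simp
  · have hne : tau X n (k+1) - tau X n k ≠ 0 := sub_ne_zero.2 h
    unfold sk sl
    field_simp
    ring

lemma genuine_of_lt {k : ℕ} (h : tau X n k < tau X n (k+1)) :
    ((pts X n).filter (fun u => tau X n k < u)).Nonempty := by
  by_contra hc
  rw [tau_succ, nxt_eq X n hc] at h
  exact lt_irrefl _ h

lemma tau_succ_mem {k : ℕ} (h : tau X n k < tau X n (k+1)) :
    tau X n (k+1) ∈ pts X n := by
  rw [tau_succ]
  exact (nxt_mem X n (genuine_of_lt X n h)).1

lemma sk_nonneg (k : ℕ) : 0 ≤ sk X n k := by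
  rcases eq_or_lt_of_le (tau_mono X n (Nat.le_succ k)) with h | h
  · unfold sk sl; rw [← h]; simp
  · unfold sk sl
    apply div_nonneg _ (by linarith)
    have := F_mono X n h.le
    linarith

lemma sk_succ_le (k : ℕ) : sk X n (k+1) ≤ sk X n k := by
  rcases eq_or_lt_of_le (tau_mono X n (Nat.le_succ k)) with h | h
  · -- degenerate at k: stage empty, also empty at k+1
    have hempty : ¬ ((pts X n).filter (fun u => tau X n k < u)).Nonempty := by
      by_contra hc
      have := (nxt_mem X n hc).2
      rw [← tau_succ] at this
      rw [← h] at this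
      exact lt_irrefl _ this
    have h2 : tau X n (k+2) = tau X n (k+1) := by
      rw [tau_succ]
      exact nxt_eq X n (by rw [← h]; exact hempty)
    have e1 : sk X n (k+1) = 0 := by unfold sk sl; rw [h2]; simp
    have e2 : sk X n k = 0 := by unfold sk sl; rw [← h]; simp
    rw [e1, e2]
  · rcases eq_or_lt_of_le (tau_mono X n (Nat.le_succ (k+1))) with h2 | h2
    · have e1 : sk X n (k+1) = 0 := by unfold sk sl; rw [← h2]; simp
      rw [e1]; exact sk_nonneg X n k
    · -- both genuine
      set a := tau X n k
      set b := tau X n (k+1)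
      set c := tau X n (k+2)
      have hc_pts : c ∈ pts X n := tau_succ_mem X n h2
      have hac : a < c := lt_trans h h2
      have h3 : sl (empCDF X n) a c ≤ sl (empCDF X n) a b := by
        have := sl_le_nxt X n hc_pts hac
        rwa [← tau_succ] at this
      -- from sl a c ≤ sl a b deduce sl b c ≤ sl a b
      unfold sk
      unfold sl at h3 ⊢
      rw [div_le_div_iff₀ (by linarith) (by linarith)] at h3
      rw [div_le_div_iff₀ (by linarith) (by linarith)]
      nlinarith [h3]

/-- the extended pieces agree at the junction -/
lemma lin_diff (k : ℕ) (x : ℝ) :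
    lin X n k x - lin X n (k+1) x
      = (sk X n k - sk X n (k+1)) * (x - tau X n (k+1)) := by
  have h := Lval X n k
  unfold lin
  linarith [h, mul_comm (sk X n k) (x - tau X n k)]

lemma lin_n (hn : 0 < n) (x : ℝ) : lin X n n x = 1 := by
  unfold lin
  rw [sk_n, F_tau_n X n hn]; ring

/-- pieces ordering: later pieces lie below earlier ones to the right -/
lemma C1 {j k : ℕ} (hjk : j ≤ k) {x : ℝ} (hx : tau X n k ≤ x) :
    lin X n k x ≤ lin X n j x := by
  induction k, hjk using Nat.le_induction with
  | base => exact le_refl _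
  | succ k hjk ih =>
    have h1 : tau X n k ≤ x := le_trans (tau_mono X n (Nat.le_succ k)) hx
    refine le_trans ?_ (ih h1)
    have := lin_diff X n k x
    nlinarith [sk_succ_le X n k, sub_nonneg.2 hx]

lemma C2 {j k : ℕ} (hkj : k ≤ j) {x : ℝ} (hx : x ≤ tau X n (k+1)) :
    lin X n k x ≤ lin X n j x := by
  induction j, hkj using Nat.le_induction with
  | base => exact le_refl _
  | succ j hkj ih =>
    refine le_trans ih ?_
    have hx2 : x ≤ tau X n (j+1) :=
      le_trans hx (tau_mono X n (Nat.succ_le_succ hkj))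
    have := lin_diff X n j x
    nlinarith [sk_succ_le X n j, sub_nonpos.2 hx2]

lemma P1 {k : ℕ} (hk : k ≤ n) {x : ℝ} (h1 : tau X n k ≤ x) (h2 : x ≤ tau X n (k+1)) :
    G X n x = lin X n k x := by
  apply le_antisymm
  · exact Finset.inf'_le _ (Finset.mem_range.2 (Nat.lt_succ_of_le hk))
  · apply Finset.le_inf'
    intro j _
    rcases le_or_gt j k with hkj | hjk
    · exact C1 X n hkj h1
    · exact C2 X n hjk.le h2

lemma P2 (hn : 0 < n) {x : ℝ} (hx : tau X n n ≤ x) : G X n x = 1 := by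
  have h1 : G X n x = lin X n n x := by
    apply le_antisymm
    · exact Finset.inf'_le _ (Finset.mem_range.2 (Nat.lt_succ_self n))
    · apply Finset.le_inf'
      intro j hj
      exact C1 X n (Nat.lt_succ_iff.1 (Finset.mem_range.1 hj)) hx
  rw [h1, lin_n X n hn]

end GrenAux
namespace GrenAux
variable (X : ℕ → ℝ) (n : ℕ)

/-- locate a point in a piece -/
lemma locate {z : ℝ} (hz : 0 ≤ z) (hz2 : z < tau X n n) :
    ∃ k < n, tau X n k ≤ z ∧ z < tau X n (k+1) := by
  classical
  set P : ℕ → Prop := fun k => tau X n k ≤ z with hP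
  have hP0 : P 0 := by simpa [hP, tau_zero] using hz
  set k := Nat.findGreatest P n with hk
  have hle : k ≤ n := Nat.findGreatest_le n
  have hPk : P k := Nat.findGreatest_spec (Nat.zero_le n) hP0
  have hkn : k ≠ n := by
    intro h
    rw [h] at hPk
    exact absurd hz2 (not_lt.2 hPk)
  have hklt : k < n := lt_of_le_of_ne hle hkn
  refine ⟨k, hklt, hPk, ?_⟩
  have := Nat.findGreatest_is_greatest (P := P) (k := k+1) (Nat.lt_succ_self _) hklt
  exact not_le.1 this

/-- majorant property -/
lemma F_le_G (hn : 0 < n) {z : ℝ} (hz : 0 ≤ z) : empCDF X n z ≤ G X n z := by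
  rcases le_or_gt (tau X n n) z with h | h
  · rw [P2 X n hn h]; exact F_le_one X n z
  · obtain ⟨k, hk, h1, h2⟩ := locate X n hz h
    rw [P1 X n hk.le h1 h2.le]
    -- show F z ≤ lin k z
    rcases eq_or_lt_of_le h1 with he | hlt
    · rw [← he]; unfold lin; nlinarith [sk_nonneg X n k]
    · by_cases hd : ∃ u ∈ pts X n, tau X n k < u ∧ u ≤ z
      · -- w := largest data point in (τ k, z]
        have hne : ((pts X n).filter (fun u => tau X n k < u ∧ u ≤ z)).Nonempty := by
          obtain ⟨u, hu, h3, h4⟩ := hd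
          exact ⟨u, Finset.mem_filter.2 ⟨hu, h3, h4⟩⟩
        set w := ((pts X n).filter (fun u => tau X n k < u ∧ u ≤ z)).max' hne with hw
        have hwmem := Finset.max'_mem _ hne
        rw [← hw] at hwmem
        simp only [Finset.mem_filter] at hwmem
        obtain ⟨hwpts, hwk, hwz⟩ := hwmem
        have hFz : empCDF X n z = empCDF X n w := by
          apply F_congr_of_count
          intro i hi
          constructor
          · intro hiz
            rcases le_or_gt (X i) (tau X n k) with h5 | h5
            · exact le_trans h5 hwk.le
            · exact Finset.le_max' _ _ (Finset.mem_filter.2 ⟨X_mem_pts X n hi, h5, hiz⟩)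
          · intro hiw; exact le_trans hiw hwz
        have hsl : sl (empCDF X n) (tau X n k) w ≤ sk X n k := by
          have := sl_le_nxt X n hwpts hwk
          rw [← tau_succ] at this
          exact this
        have hFw : empCDF X n w ≤ empCDF X n (tau X n k) + sk X n k * (w - tau X n k) := by
          unfold sl at hsl
          rw [div_le_iff₀ (by linarith)] at hsl
          linarith
        rw [hFz]
        unfold lin
        nlinarith [sk_nonneg X n k]
      · push_neg at hd
        have hFz : empCDF X n z = empCDF X n (tau X n k) := by
          apply F_congr_of_count
          intro i hi
          constructor
          · intro hiz
            by_contra hc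
            push_neg at hc
            exact absurd hiz (not_le.2 (hd (X i) (X_mem_pts X n hi) hc))
          · intro h6; exact le_trans h6 hlt.le
        rw [hFz]
        unfold lin
        nlinarith [sk_nonneg X n k]

end GrenAux
namespace GrenAux
variable (X : ℕ → ℝ) (n : ℕ)

lemma concave_affine (c m t : ℝ) : ConcaveOn ℝ (Ici (0:ℝ)) (fun x => c + m * (x - t)) := by
  refine ⟨convex_Ici 0, ?_⟩
  intro x _ y _ a b ha hb hab
  simp only [smul_eq_mul]
  have : a * (c + m * (x - t)) + b * (c + m * (y - t)) = c + m * ((a * x + b * y) - t) := by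
    linear_combination (c - m * t) * hab
  linarith [this.le]

lemma concaveOn_inf' {ι : Type*} (s : Finset ι) (hs : s.Nonempty) (f : ι → ℝ → ℝ) :
    (∀ i ∈ s, ConcaveOn ℝ (Ici (0:ℝ)) (f i)) →
    ConcaveOn ℝ (Ici (0:ℝ)) (fun x => s.inf' hs (fun i => f i x)) := by
  induction hs using Finset.Nonempty.cons_induction with
  | singleton a =>
    intro hf
    simpa using hf a (by simp)
  | cons a s ha hs ih =>
    intro hf
    have h1 : ConcaveOn ℝ (Ici (0:ℝ)) (fun x => s.inf' hs (fun i => f i x)) :=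
      ih (fun i hi => hf i (Finset.mem_cons_of_mem hi))
    have h2 : ConcaveOn ℝ (Ici (0:ℝ)) (f a) := hf a (Finset.mem_cons_self a s)
    have h3 := h2.inf h1
    refine h3.congr (fun x _ => ?_)
    rw [Finset.inf'_cons]
    rfl

lemma G_concave : ConcaveOn ℝ (Ici (0:ℝ)) (G X n) := by
  unfold G lin
  exact concaveOn_inf' _ _ _ (fun k _ => concave_affine _ _ _)

lemma G_le_one (hn : 0 < n) (x : ℝ) : G X n x ≤ 1 := by
  have h := Finset.inf'_le (b := n) (fun k => lin X n k x)
    (Finset.mem_range.2 (Nat.lt_succ_self n))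
  rw [lin_n X n hn] at h
  exact h

/-- leastness of `G` among concave majorants of the empirical CDF -/
lemma G_least (hn : 0 < n) {η : ℝ → ℝ} (hconc : ConcaveOn ℝ (Ici (0:ℝ)) η)
    (hmaj : ∀ z ∈ Ici (0:ℝ), empCDF X n z ≤ η z) {x : ℝ} (hx : 0 ≤ x) :
    G X n x ≤ η x := by
  rcases le_or_gt (tau X n n) x with h | h
  · rw [P2 X n hn h]
    have h1 : empCDF X n x = 1 := le_antisymm (F_le_one X n x)
      (by rw [← F_tau_n X n hn]; exact F_mono X n h)
    rw [← h1]; exact hmaj x hx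
  · obtain ⟨k, hk, h1, h2⟩ := locate X n hx h
    rw [P1 X n hk.le h1 h2.le]
    have hlt : tau X n k < tau X n (k+1) := lt_of_le_of_lt h1 h2
    set Δ := tau X n (k+1) - tau X n k with hΔ
    have hΔpos : 0 < Δ := by rw [hΔ]; linarith
    set a := (tau X n (k+1) - x) / Δ with hA
    set b := (x - tau X n k) / Δ with hB
    have ha : 0 ≤ a := div_nonneg (by linarith) hΔpos.le
    have hb : 0 ≤ b := div_nonneg (by linarith) hΔpos.le
    have hab : a + b = 1 := by rw [hA, hB]; field_simp [hΔ]; linarith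
    have hcomb : a • tau X n k + b • tau X n (k+1) = x := by
      simp only [smul_eq_mul, hA, hB]
      field_simp
      ring
    have h3 := hconc.2 (mem_Ici.2 (tau_nonneg X n k)) (mem_Ici.2 (tau_nonneg X n (k+1)))
      ha hb hab
    rw [hcomb] at h3
    have h4 : empCDF X n (tau X n k) ≤ η (tau X n k) :=
      hmaj _ (mem_Ici.2 (tau_nonneg X n k))
    have h5 : empCDF X n (tau X n (k+1)) ≤ η (tau X n (k+1)) :=
      hmaj _ (mem_Ici.2 (tau_nonneg X n (k+1)))
    have h6 : lin X n k x = a * empCDF X n (tau X n k) + b * empCDF X n (tau X n (k+1)) := by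
      have hL := Lval X n k
      unfold lin
      rw [hA, hB]
      field_simp [hΔ]
      nlinarith [hL]
    simp only [smul_eq_mul] at h3
    nlinarith [mul_le_mul_of_nonneg_left h4 ha, mul_le_mul_of_nonneg_left h5 hb]

/-- identification of the LCM with the explicit hull -/
lemma lcm_eq_G (hn : 0 < n) {x : ℝ} (hx : 0 ≤ x) : lcmCDF X n x = G X n x := by
  unfold lcmCDF lcmOn
  have hGmem : G X n x ∈ {y : ℝ | ∃ η : ℝ → ℝ, ConcaveOn ℝ (Ici (0:ℝ)) η ∧
      (∃ C, ∀ z ∈ Ici (0:ℝ), |η z| ≤ C) ∧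
      (∀ z ∈ Ici (0:ℝ), empCDF X n z ≤ η z) ∧ η x = y} := by
    refine ⟨G X n, G_concave X n, ⟨1, ?_⟩, fun z hz => F_le_G X n hn hz, rfl⟩
    intro z hz
    rw [abs_le]
    constructor
    · linarith [F_le_G X n hn (mem_Ici.1 hz), F_nonneg X n z]
    · exact G_le_one X n hn z
  have hlb : ∀ y ∈ {y : ℝ | ∃ η : ℝ → ℝ, ConcaveOn ℝ (Ici (0:ℝ)) η ∧
      (∃ C, ∀ z ∈ Ici (0:ℝ), |η z| ≤ C) ∧
      (∀ z ∈ Ici (0:ℝ), empCDF X n z ≤ η z) ∧ η x = y}, G X n x ≤ y := by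
    rintro y ⟨η, hconc, _, hmaj, rfl⟩
    exact G_least X n hn hconc hmaj hx
  exact le_antisymm (csInf_le ⟨G X n x, hlb⟩ hGmem) (le_csInf ⟨G X n x, hGmem⟩ hlb)

end GrenAux
namespace GrenAux
variable (X : ℕ → ℝ) (n : ℕ)

lemma gren_piece (hn : 0 < n) {k : ℕ} (hk : k ≤ n) {x : ℝ}
    (h1 : tau X n k < x) (h2 : x ≤ tau X n (k+1)) :
    grenander X n x = sk X n k := by
  have hx0 : 0 ≤ x := le_trans (tau_nonneg X n k) h1.le
  have hEq : lcmCDF X n =ᶠ[𝓝[Iio x] x] lin X n k := by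
    have hmem : Ioi (tau X n k) ∈ 𝓝[Iio x] x :=
      mem_nhdsWithin_of_mem_nhds (Ioi_mem_nhds h1)
    filter_upwards [hmem, self_mem_nhdsWithin] with z hz hz'
    have hz0 : (0:ℝ) ≤ z := le_trans (tau_nonneg X n k) (le_of_lt hz)
    rw [lcm_eq_G X n hn hz0, P1 X n hk (le_of_lt hz) (le_trans (le_of_lt hz') h2)]
  have hx : lcmCDF X n x = lin X n k x := by
    rw [lcm_eq_G X n hn hx0, P1 X n hk h1.le h2]
  rw [grenander, hEq.derivWithin_eq hx]
  have hd : HasDerivWithinAt (lin X n k) (sk X n k) (Iio x) x := by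
    have : HasDerivAt (fun y => empCDF X n (tau X n k) + sk X n k * (y - tau X n k))
        (sk X n k) x := by
      simpa using (((hasDerivAt_id x).sub_const (tau X n k)).const_mul (sk X n k)).const_add
        (empCDF X n (tau X n k))
    exact this.hasDerivWithinAt
  exact hd.derivWithin (uniqueDiffWithinAt_Iio x)

lemma gren_top (hn : 0 < n) {x : ℝ} (h1 : tau X n n < x) : grenander X n x = 0 := by
  have hEq : lcmCDF X n =ᶠ[𝓝[Iio x] x] (fun _ => (1:ℝ)) := by
    have hmem : Ioi (tau X n n) ∈ 𝓝[Iio x] x :=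
      mem_nhdsWithin_of_mem_nhds (Ioi_mem_nhds h1)
    filter_upwards [hmem] with z hz
    have hz0 : (0:ℝ) ≤ z := le_trans (tau_nonneg X n n) (le_of_lt hz)
    rw [lcm_eq_G X n hn hz0, P2 X n hn (le_of_lt hz)]
  have hx : lcmCDF X n x = 1 := by
    rw [lcm_eq_G X n hn (le_trans (tau_nonneg X n n) h1.le), P2 X n hn h1.le]
  rw [grenander, hEq.derivWithin_eq hx]
  exact (hasDerivWithinAt_const x _ 1).derivWithin (uniqueDiffWithinAt_Iio x)

/-- uniqueness of the piece containing a point -/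
lemma piece_unique {x : ℝ} {j k : ℕ} (hj : x ∈ Ioc (tau X n j) (tau X n (j+1)))
    (hk : x ∈ Ioc (tau X n k) (tau X n (k+1))) : j = k := by
  by_contra hne
  rcases lt_or_gt_of_ne hne with h | h
  · exact absurd (le_trans hj.2 (tau_mono X n h)) (not_le.2 hk.1)
  · exact absurd (le_trans hk.2 (tau_mono X n h)) (not_le.2 hj.1)

end GrenAux
namespace GrenAux
variable (X : ℕ → ℝ) (n : ℕ)

/-- locate a point in a half-open piece -/
lemma locate' {z : ℝ} (hz : 0 < z) (hz2 : z ≤ tau X n n) :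
    ∃ k < n, tau X n k < z ∧ z ≤ tau X n (k+1) := by
  classical
  set P : ℕ → Prop := fun k => tau X n k < z with hP
  have hP0 : P 0 := by simpa [hP, tau_zero] using hz
  set k := Nat.findGreatest P n with hk
  have hle : k ≤ n := Nat.findGreatest_le n
  have hPk : P k := Nat.findGreatest_spec (Nat.zero_le n) hP0
  have hkn : k ≠ n := by
    intro hh
    rw [hh] at hPk
    exact absurd hz2 (not_le.2 hPk)
  have hklt : k < n := lt_of_le_of_ne hle hkn
  refine ⟨k, hklt, hPk, ?_⟩
  have := Nat.findGreatest_is_greatest (P := P) (k := k+1) (Nat.lt_succ_self _) hklt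
  exact not_lt.1 this

end GrenAux

open GrenAux in
/-- Lemma `lem:Basic`: for distinct data points in `(0,∞)` and any
`h : ℝ → ℝ`, the Grenander plug-in estimator `∫₀^∞ h(f̂ₙ(x)) f̂ₙ(x) dx` equals the
empirical-measure estimator `n⁻¹ ∑ᵢ h(f̂ₙ(Xᵢ))`. -/
theorem plugin_eq_empirical
    (n : ℕ) (hn : 0 < n) (X : ℕ → ℝ)
    (hpos : ∀ i < n, 0 < X i)
    (hdist : ∀ i < n, ∀ j < n, i ≠ j → X i ≠ X j)
    (h : ℝ → ℝ) :
    ∫ x in Ici (0:ℝ), h (grenander X n x) * grenander X n x =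
      (n : ℝ)⁻¹ * ∑ i ∈ Finset.range n, h (grenander X n (X i)) := by
  classical
  have hXle : ∀ i < n, X i ≤ tau X n n := fun i hi => stab X n _ (X_mem_pts X n hi)
  -- pointwise identification on (0,∞)
  have hpw : ∀ x ∈ Ioi (0:ℝ), h (grenander X n x) * grenander X n x
      = ∑ k ∈ Finset.range n,
          (Ioc (tau X n k) (tau X n (k+1))).indicator
            (fun _ => h (sk X n k) * sk X n k) x := by
    intro x hx
    rw [mem_Ioi] at hx
    rcases le_or_gt x (tau X n n) with hcase | hcase
    · obtain ⟨k, hk, h1, h2⟩ := locate' X n hx hcase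
      rw [gren_piece X n hn hk.le h1 h2]
      rw [Finset.sum_eq_single_of_mem k (Finset.mem_range.2 hk)]
      · rw [indicator_of_mem (mem_Ioc.2 ⟨h1, h2⟩)]
      · intro j hj hjk
        apply indicator_of_notMem
        intro hmem
        exact hjk (piece_unique X n hmem (mem_Ioc.2 ⟨h1, h2⟩))
    · rw [gren_top X n hn hcase, mul_zero]
      symm
      apply Finset.sum_eq_zero
      intro k hk
      apply indicator_of_notMem
      intro hmem
      have : x ≤ tau X n n := le_trans hmem.2 (tau_mono X n (Finset.mem_range.1 hk))
      exact absurd hcase (not_lt.2 this)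
  -- integrability of the pieces
  have hint : ∀ k ∈ Finset.range n,
      Integrable ((Ioc (tau X n k) (tau X n (k+1))).indicator
        (fun _ => h (sk X n k) * sk X n k))
        (volume.restrict (Ioi (0:ℝ))) := by
    intro k _
    rw [integrable_indicator_iff measurableSet_Ioc]
    exact integrableOn_const (lt_of_le_of_lt (Measure.restrict_apply_le _ _) measure_Ioc_lt_top).ne
  -- compute the integral
  have hI : ∫ x in Ici (0:ℝ), h (grenander X n x) * grenander X n x
      = ∑ k ∈ Finset.range n,
          (tau X n (k+1) - tau X n k) * (h (sk X n k) * sk X n k) := by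
    rw [integral_Ici_eq_integral_Ioi,
      setIntegral_congr_fun measurableSet_Ioi hpw, integral_finset_sum _ hint]
    apply Finset.sum_congr rfl
    intro k _
    rw [integral_indicator measurableSet_Ioc, Measure.restrict_restrict measurableSet_Ioc]
    have hsub : Ioc (tau X n k) (tau X n (k+1)) ∩ Ioi (0:ℝ)
        = Ioc (tau X n k) (tau X n (k+1)) := by
      apply inter_eq_self_of_subset_left
      intro y hy
      exact lt_of_le_of_lt (tau_nonneg X n k) hy.1
    rw [hsub, setIntegral_const, Real.volume_real_Ioc_of_le (tau_mono X n (Nat.le_succ k)),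
      smul_eq_mul]
  -- rewrite areas as counts
  have harea : ∀ k : ℕ, (tau X n (k+1) - tau X n k) * (h (sk X n k) * sk X n k)
      = h (sk X n k) * ((n:ℝ)⁻¹ * ((Finset.range n).filter
          (fun i => X i ∈ Ioc (tau X n k) (tau X n (k+1)))).card) := by
    intro k
    have hL := Lval X n k
    have hD := F_diff X n (tau_mono X n (Nat.le_succ k))
      (a := tau X n k) (b := tau X n (k+1))
    rw [← hD]
    linear_combination (h (sk X n k)) * hL
  -- regroup the empirical sum
  have hB : Finset.range n = (Finset.range n).biUnion
      (fun k => (Finset.range n).filter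
        (fun i => X i ∈ Ioc (tau X n k) (tau X n (k+1)))) := by
    apply Finset.ext
    intro i
    simp only [Finset.mem_biUnion, Finset.mem_filter, Finset.mem_range]
    constructor
    · intro hi
      obtain ⟨k, hk, h1, h2⟩ := locate' X n (hpos i hi) (hXle i hi)
      exact ⟨k, hk, hi, mem_Ioc.2 ⟨h1, h2⟩⟩
    · rintro ⟨k, _, hi, _⟩; exact hi
  have hdisj : ∀ j ∈ (Finset.range n : Finset ℕ), ∀ k ∈ (Finset.range n : Finset ℕ),
      j ≠ k →
      Disjoint ((Finset.range n).filter
          (fun i => X i ∈ Ioc (tau X n j) (tau X n (j+1))))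
        ((Finset.range n).filter
          (fun i => X i ∈ Ioc (tau X n k) (tau X n (k+1)))) := by
    intro j _ k _ hjk
    rw [Finset.disjoint_left]
    intro i hi1 hi2
    exact hjk (piece_unique X n (Finset.mem_filter.1 hi1).2 (Finset.mem_filter.1 hi2).2)
  have hsum : ∑ i ∈ Finset.range n, h (grenander X n (X i))
      = ∑ k ∈ Finset.range n, (((Finset.range n).filter
          (fun i => X i ∈ Ioc (tau X n k) (tau X n (k+1)))).card : ℝ) * h (sk X n k) := by
    conv_lhs => rw [hB]
    rw [Finset.sum_biUnion hdisj]
    apply Finset.sum_congr rfl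
    intro k hk
    have hcg : ∀ i ∈ (Finset.range n).filter
        (fun i => X i ∈ Ioc (tau X n k) (tau X n (k+1))),
        h (grenander X n (X i)) = h (sk X n k) := by
      intro i hi
      have hmem := (Finset.mem_filter.1 hi).2
      rw [gren_piece X n hn (Finset.mem_range.1 hk).le hmem.1 hmem.2]
    rw [Finset.sum_congr rfl hcg, Finset.sum_const, nsmul_eq_mul]
  rw [hI, hsum, Finset.mul_sum]
  apply Finset.sum_congr rfl
  intro k _
  rw [harea k]
  ring
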